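/- arXiv:2210.00303 — 2 statements merged into one kernel-verified Lean document; each statement's English description precedes it below -/
import Mathlib

section
/- The kernel of Ψ is {±I₂}: for A ∈ SL₂(ℝ), Ψ(A) = I₃ if and only if A = I₂ or A = −I₂. -/
open Matrix

noncomputable section

/-- The space of 3×3 real matrices. -/
abbrev M3 := Matrix (Fin 3) (Fin 3) ℝ

/-- The matrix `J = diag(1, 1, −1)`. -/
def Jmat : M3 := Matrix.diagonal ![1, 1, -1]

/-- The group `SL(2, ℝ)`. -/
abbrev SL2R := Matrix.SpecialLinearGroup (Fin 2) ℝ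

/-- The map `Ψ : SL(2,ℝ) → M₃(ℝ)`. -/
def Psi (A : SL2R) : M3 :=
  let a := (A : Matrix (Fin 2) (Fin 2) ℝ) 0 0
  let b := (A : Matrix (Fin 2) (Fin 2) ℝ) 0 1
  let c := (A : Matrix (Fin 2) (Fin 2) ℝ) 1 0
  let d := (A : Matrix (Fin 2) (Fin 2) ℝ) 1 1
  !![(a^2 - b^2 - c^2 + d^2)/2, a*b - c*d, (a^2 + b^2 - c^2 - d^2)/2;
     a*c - b*d,                 a*d + b*c, a*c + b*d;
     (a^2 - b^2 + c^2 - d^2)/2, a*b + c*d, (a^2 + b^2 + c^2 + d^2)/2]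

set_option maxHeartbeats 1000000 in
/-- The kernel of `Ψ` is `{±I₂}`: for `A ∈ SL₂(ℝ)`, `Ψ(A) = I₃` if and only if
`A = I₂` or `A = −I₂`. -/
theorem Psi_ker_eq_pm_one :
    ∀ A : SL2R, Psi A = 1 ↔
      ((A : Matrix (Fin 2) (Fin 2) ℝ) = 1 ∨ (A : Matrix (Fin 2) (Fin 2) ℝ) = -1) := by
  intro A
  set a := (A : Matrix (Fin 2) (Fin 2) ℝ) 0 0 with ha
  set b := (A : Matrix (Fin 2) (Fin 2) ℝ) 0 1 with hb
  set c := (A : Matrix (Fin 2) (Fin 2) ℝ) 1 0 with hc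
  set d := (A : Matrix (Fin 2) (Fin 2) ℝ) 1 1 with hd
  constructor
  · intro h
    have h' := Matrix.ext_iff.mpr h
    have h00 := h' 0 0
    have h11 := h' 1 1
    have h22 := h' 2 2
    have h01 := h' 0 1
    have h10 := h' 1 0
    have h12 := h' 1 2
    have h21 := h' 2 1
    simp [Psi, Matrix.one_apply] at h00 h11 h22 h01 h10 h12 h21
    have hbc : b ^ 2 + c ^ 2 = 0 := by nlinarith
    have hb0 : b = 0 := by nlinarith [sq_nonneg b, sq_nonneg c]
    have hc0 : c = 0 := by nlinarith [sq_nonneg b, sq_nonneg c]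
    have had : a = d := by nlinarith [sq_nonneg (a - d)]
    have ha1 : a = 1 ∨ a = -1 := mul_self_eq_one_iff.mp (by nlinarith)
    rcases ha1 with h1 | h1
    · left
      ext i j
      fin_cases i <;> fin_cases j <;>
        simp [Matrix.one_apply, ← ha, ← hb, ← hc, ← hd, h1, hb0, hc0, had ▸ h1]
    · right
      ext i j
      fin_cases i <;> fin_cases j <;>
        simp [Matrix.one_apply, ← ha, ← hb, ← hc, ← hd, h1, hb0, hc0, had ▸ h1]
  · rintro (h | h)
    · have ea : (A : Matrix (Fin 2) (Fin 2) ℝ) 0 0 = (1 : ℝ) := by rw [h]; simp [Matrix.one_apply]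
      have eb : (A : Matrix (Fin 2) (Fin 2) ℝ) 0 1 = 0 := by rw [h]; simp [Matrix.one_apply]
      have ec : (A : Matrix (Fin 2) (Fin 2) ℝ) 1 0 = 0 := by rw [h]; simp [Matrix.one_apply]
      have ed : (A : Matrix (Fin 2) (Fin 2) ℝ) 1 1 = (1 : ℝ) := by rw [h]; simp [Matrix.one_apply]
      ext i j
      fin_cases i <;> fin_cases j <;>
        norm_num [Psi, ea, eb, ec, ed, Matrix.one_apply, Fin.ext_iff]
    · have ea : (A : Matrix (Fin 2) (Fin 2) ℝ) 0 0 = (-1 : ℝ) := by rw [h]; simp [Matrix.one_apply]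
      have eb : (A : Matrix (Fin 2) (Fin 2) ℝ) 0 1 = 0 := by rw [h]; simp [Matrix.one_apply]
      have ec : (A : Matrix (Fin 2) (Fin 2) ℝ) 1 0 = 0 := by rw [h]; simp [Matrix.one_apply]
      have ed : (A : Matrix (Fin 2) (Fin 2) ℝ) 1 1 = (-1 : ℝ) := by rw [h]; simp [Matrix.one_apply]
      ext i j
      fin_cases i <;> fin_cases j <;>
        norm_num [Psi, ea, eb, ec, ed, Matrix.one_apply, Fin.ext_iff]
end
end

section
/- Let n ∈ ℤ, let μ be a left Haar measure on G = SO(2,1)°, let V be a complex Hilbert space, and let π be a group homomorphism from G into the unitary operators on V. Let f : G → ℂ satisfy f(k_{θ₁} · x · k_{θ₂}) = e^{in(θ₁+θ₂)} f(x) for all x ∈ G and all θ₁, θ₂ ∈ ℝ, and assume that for each v ∈ V the function x ↦ f(x) • (π(x)v) is Bochner integrable with respect to μ. If the only vector w ∈ V satisfying π(k_θ)w = e^{−inθ} w for all θ ∈ ℝ is w = 0, then ∫_G f(x) • (π(x)v) dμ(x) = 0 for every v ∈ V. -/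
open Matrix MeasureTheory

noncomputable section

/-- The rotation matrix `k_θ`. -/
def kmat (θ : ℝ) : M3 :=
  !![Real.cos θ, -Real.sin θ, 0; Real.sin θ, Real.cos θ, 0; 0, 0, 1]

lemma kmat_mul_neg (θ : ℝ) : kmat θ * kmat (-θ) = 1 := by
  have h1 : (1 : M3) = !![1,0,0; 0,1,0; 0,0,1] := by
    ext i j; fin_cases i <;> fin_cases j <;>
      simp [Matrix.one_apply, Matrix.vecHead, Matrix.vecTail]
  rw [h1, kmat, kmat, Matrix.mul_fin_three]
  ext i j; fin_cases i <;> fin_cases j <;>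
    simp [Real.cos_neg, Real.sin_neg, Matrix.vecHead, Matrix.vecTail] <;>
    nlinarith [Real.sin_sq_add_cos_sq θ]

/-- The rotation `k_θ` as an element of `GL(3, ℝ)`. -/
def kGL (θ : ℝ) : GL (Fin 3) ℝ :=
  ⟨kmat θ, kmat (-θ), kmat_mul_neg θ, by simpa using kmat_mul_neg (-θ)⟩

lemma continuous_kmat : Continuous kmat := by
  apply continuous_matrix
  intro i j
  fin_cases i <;> fin_cases j <;>
    simp [kmat, Matrix.vecHead, Matrix.vecTail] <;> fun_prop

lemma continuous_kGL : Continuous kGL := by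
  rw [Units.continuous_iff]
  exact ⟨continuous_kmat, continuous_kmat.comp continuous_neg⟩

/-- `SO(2,1)(ℝ)`, realised as the subgroup of `GL(3, ℝ)` consisting of the matrices of
determinant `1` that preserve the quadratic form given by `J = diag(1, 1, −1)`. -/
def SO21 : Subgroup (GL (Fin 3) ℝ) where
  carrier := {g | (g : M3).det = 1 ∧ (g : M3)ᵀ * Jmat * (g : M3) = Jmat}
  one_mem' := by constructor <;> simp
  mul_mem' := by
    rintro a b ⟨ha1, ha2⟩ ⟨hb1, hb2⟩
    refine ⟨by simp [ha1, hb1], ?_⟩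
    have : ((a * b : GL (Fin 3) ℝ) : M3)ᵀ * Jmat * ((a * b : GL (Fin 3) ℝ) : M3)
        = (b : M3)ᵀ * ((a : M3)ᵀ * Jmat * (a : M3)) * (b : M3) := by
      simp only [Units.val_mul, Matrix.transpose_mul, Matrix.mul_assoc]
    rw [this, ha2, hb2]
  inv_mem' := by
    rintro g ⟨h1, h2⟩
    have hAB : (g : M3) * ((g⁻¹ : GL (Fin 3) ℝ) : M3) = 1 := by
      rw [← Units.val_mul, mul_inv_cancel, Units.val_one]
    refine ⟨by simp [Matrix.coe_units_inv, Matrix.det_nonsing_inv, h1], ?_⟩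
    calc ((g⁻¹ : GL (Fin 3) ℝ) : M3)ᵀ * Jmat * ((g⁻¹ : GL (Fin 3) ℝ) : M3)
        = ((g⁻¹ : GL (Fin 3) ℝ) : M3)ᵀ * ((g : M3)ᵀ * Jmat * (g : M3))
            * ((g⁻¹ : GL (Fin 3) ℝ) : M3) := by rw [h2]
      _ = ((g : M3) * ((g⁻¹ : GL (Fin 3) ℝ) : M3))ᵀ * Jmat
            * ((g : M3) * ((g⁻¹ : GL (Fin 3) ℝ) : M3)) := by
          simp only [Matrix.transpose_mul, Matrix.mul_assoc]
      _ = Jmat := by rw [hAB]; simp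

lemma kGL_mem (θ : ℝ) : kGL θ ∈ SO21 := by
  constructor
  · show (kmat θ).det = 1
    simp [kmat, Matrix.det_fin_three]
    nlinarith [Real.sin_sq_add_cos_sq θ]
  · show (kmat θ)ᵀ * Jmat * kmat θ = Jmat
    have hJ : Jmat = !![1,0,0; 0,1,0; 0,0,-1] := by
      ext i j; fin_cases i <;> fin_cases j <;>
        simp [Jmat, Matrix.vecHead, Matrix.vecTail]
    have hT : (kmat θ)ᵀ = !![Real.cos θ, Real.sin θ, 0; -Real.sin θ, Real.cos θ, 0; 0, 0, 1] := by
      ext i j; fin_cases i <;> fin_cases j <;> simp [kmat, Matrix.vecHead, Matrix.vecTail]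
    rw [hJ, hT, kmat, Matrix.mul_fin_three, Matrix.mul_fin_three]
    ext i j; fin_cases i <;> fin_cases j <;>
      simp [Matrix.vecHead, Matrix.vecTail] <;> nlinarith [Real.sin_sq_add_cos_sq θ]

/-- The rotation `k_θ` as an element of `SO(2,1)(ℝ)`. -/
def kS (θ : ℝ) : ↥SO21 := ⟨kGL θ, kGL_mem θ⟩

lemma continuous_kS : Continuous kS := continuous_kGL.subtype_mk _

lemma kS_zero : kS 0 = 1 := by
  apply Subtype.ext
  apply Units.ext
  show kmat 0 = 1
  ext i j; fin_cases i <;> fin_cases j <;>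
    simp [kmat, Matrix.one_apply, Matrix.vecHead, Matrix.vecTail]

lemma kS_mem_cc (θ : ℝ) : kS θ ∈ connectedComponent (1 : ↥SO21) := by
  have h : Set.range kS ⊆ connectedComponent (1 : ↥SO21) := by
    apply IsPreconnected.subset_connectedComponent
    · rw [← Set.image_univ]
      exact isPreconnected_univ.image kS continuous_kS.continuousOn
    · exact ⟨0, kS_zero⟩
  exact h ⟨θ, rfl⟩

/-- `G = SO(2,1)°`, the connected component of the identity in `SO(2,1)(ℝ)`. -/
def SO21c : Subgroup ↥SO21 := Subgroup.connectedComponentOfOne ↥SO21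

/-- The rotation `k_θ` as an element of `G = SO(2,1)°`; the maximal compact subgroup
`K` is the set of all `kG θ`, `θ ∈ ℝ`. -/
def kG (θ : ℝ) : ↥SO21c := ⟨kS θ, kS_mem_cc θ⟩

/-- The underlying 3×3 matrix of an element of `G = SO(2,1)°`. -/
def toM (g : ↥SO21c) : M3 := (((g : ↥SO21) : GL (Fin 3) ℝ) : M3)

instance : MeasurableSpace ↥SO21c := borel ↥SO21c
instance : BorelSpace ↥SO21c := ⟨rfl⟩

lemma kG_zero : kG 0 = 1 := Subtype.ext kS_zero

lemma kG_mul_neg (θ : ℝ) : kG θ * kG (-θ) = 1 := by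
  apply Subtype.ext; apply Subtype.ext; apply Units.ext
  exact kmat_mul_neg θ

lemma kG_inv (θ : ℝ) : (kG θ)⁻¹ = kG (-θ) :=
  inv_eq_of_mul_eq_one_right (kG_mul_neg θ)

/-- If `f : G → ℂ` is `τ_n × τ_n`-bi-equivariant, `π` is a unitary representation of
`G = SO(2,1)°` on a complex Hilbert space `V`, and the only vector `w ∈ V` with
`π(k_θ)w = e^{−inθ} w` for all `θ` is `w = 0`, then `∫_G f(x) • (π(x)v) dμ(x) = 0`
for every `v ∈ V`. -/
theorem integral_bi_equivariant_eq_zero_of_no_isotypic_vector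
    (n : ℤ) (μ : MeasureTheory.Measure ↥SO21c) [μ.IsHaarMeasure]
    (V : Type*) [NormedAddCommGroup V] [InnerProductSpace ℂ V] [CompleteSpace V]
    (π : ↥SO21c →* unitary (V →L[ℂ] V))
    (f : ↥SO21c → ℂ)
    (hf : ∀ (x : ↥SO21c) (θ₁ θ₂ : ℝ),
      f (kG θ₁ * x * kG θ₂) = Complex.exp ((n : ℂ) * (θ₁ + θ₂) * Complex.I) * f x)
    (hint : ∀ v : V,
      MeasureTheory.Integrable (fun x : ↥SO21c => f x • ((π x : V →L[ℂ] V) v)) μ)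
    (hw : ∀ w : V,
      (∀ θ : ℝ, (π (kG θ) : V →L[ℂ] V) w = Complex.exp (-((n : ℂ) * θ) * Complex.I) • w) →
        w = 0) :
    ∀ v : V, (∫ x : ↥SO21c, f x • ((π x : V →L[ℂ] V) v) ∂μ) = 0 := by
  intro v
  set w := ∫ x : ↥SO21c, f x • ((π x : V →L[ℂ] V) v) ∂μ with hwdef
  apply hw
  intro θ
  have hcomm : (π (kG θ) : V →L[ℂ] V) w
      = ∫ x : ↥SO21c, f x • ((π (kG θ) : V →L[ℂ] V) ((π x : V →L[ℂ] V) v)) ∂μ := by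
    rw [hwdef, ← ContinuousLinearMap.integral_comp_comm _ (hint v)]
    congr 1
    ext x
    rw [_root_.map_smul]
  have key : (∫ x : ↥SO21c, f x • ((π (kG θ) : V →L[ℂ] V) ((π x : V →L[ℂ] V) v)) ∂μ)
      = ∫ x : ↥SO21c, f ((kG θ)⁻¹ * x) • ((π x : V →L[ℂ] V) v) ∂μ := by
    have := MeasureTheory.integral_mul_left_eq_self (μ := μ)
      (f := fun x : ↥SO21c => f ((kG θ)⁻¹ * x) • ((π x : V →L[ℂ] V) v)) (kG θ)
    simpa [inv_mul_cancel_left] using this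
  have hfx : ∀ x : ↥SO21c, f ((kG θ)⁻¹ * x)
      = Complex.exp (-((n : ℂ) * θ) * Complex.I) * f x := by
    intro x
    rw [kG_inv]
    have h := hf x (-θ) 0
    rw [kG_zero, mul_one] at h
    rw [h]
    congr 2
    push_cast
    ring
  rw [hcomm, key]
  simp_rw [hfx, mul_smul]
  rw [MeasureTheory.integral_smul]
end
end
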